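/- Let C be an n×n generalized Cartan matrix of finite Dynkin type with b_i the row sums of C⁻¹, and fix a period p ≥ 1. The set of p-periodic positive integral friezes for C is finite, with cardinality at most 2^(p²·∑_i b_i) — more simply, at most ∏_i (2^(p·b_i))^p. -/

import Mathlib

open Finset Matrix

lemma per_mul {f : ℤ → ℤ} {p : ℕ} (hf : ∀ k : ℤ, f (k + p) = f k) :
    ∀ (m : ℤ) (k : ℤ), f (k + m * p) = f k := by
  intro m
  induction m using Int.induction_on with
  | zero => simp
  | succ m ih =>
      intro k
      have h : k + ((m : ℤ) + 1) * p = (k + m * p) + p := by ring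
      rw [h, hf, ih]
  | pred m ih =>
      intro k
      have h : (k + (-(m : ℤ) - 1) * p) + p = k + (-(m : ℤ)) * p := by ring
      have h2 := hf (k + (-(m : ℤ) - 1) * p)
      rw [h] at h2
      rw [← h2, ih]

lemma per_rep {f : ℤ → ℤ} {p : ℕ} (hp : 1 ≤ p) (hf : ∀ k : ℤ, f (k + p) = f k)
    (k : ℤ) : (k % p).toNat < p ∧ f k = f ((k % p).toNat) := by
  have hp0 : (0:ℤ) < p := by exact_mod_cast hp
  constructor
  · have h1 : k % p < p := Int.emod_lt_of_pos k hp0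
    omega
  · have hnn : 0 ≤ k % (p:ℤ) := Int.emod_nonneg k (by omega)
    rw [Int.toNat_of_nonneg hnn]
    have h := per_mul hf (k / p) (k % p)
    have hk : k % ↑p + k / ↑p * ↑p = k := Int.emod_add_ediv_mul k p
    rw [hk] at h
    exact h

lemma per_toNat {f : ℤ → ℤ} {p : ℕ} (hp : 1 ≤ p) (hf : ∀ k : ℤ, f (k + p) = f k)
    (k : ℤ) : ∃ m : ℕ, m < p ∧ f k = f m :=
  ⟨(k % p).toNat, (per_rep hp hf k).1, (per_rep hp hf k).2⟩

lemma sum_split {n : ℕ} (i : Fin n) (f : Fin n → ℝ) :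
    ∑ j, f j = f i + (∑ j ∈ univ.filter (· < i), f j) +
      ∑ j ∈ univ.filter (i < ·), f j := by
  rw [← Finset.sum_filter_add_sum_filter_not univ (· < i) f]
  have h : univ.filter (fun j => ¬ j < i) = insert i (univ.filter (i < ·)) := by
    ext j
    simp only [mem_filter, mem_univ, true_and, mem_insert, not_lt]
    constructor
    · intro h
      rcases eq_or_lt_of_le h with h' | h'
      · exact Or.inl h'.symm
      · exact Or.inr h'
    · rintro (rfl | h)
      · exact le_refl _
      · exact h.le
  rw [h, Finset.sum_insert (by simp)]
  ring

lemma key_bound {n : ℕ} (C : Matrix (Fin n) (Fin n) ℤ)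
    (hdiag : ∀ i, C i i = 2) (hoff : ∀ i j, i ≠ j → C i j ≤ 0)
    (hC : IsUnit (C.map (Int.cast : ℤ → ℝ)).det)
    (hinv : ∀ i j, 0 < (C.map (Int.cast : ℤ → ℝ))⁻¹ i j)
    (b : Fin n → ℝ) (hb : ∀ i, b i = ∑ j, (C.map (Int.cast : ℤ → ℝ))⁻¹ i j)
    (p : ℕ) (hp : 1 ≤ p)
    (F : Fin n × ℤ → ℤ)
    (h1 : ∀ i k, 1 ≤ F (i, k))
    (h2 : ∀ i (k : ℤ), F (i, k + p) = F (i, k))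
    (h3 : ∀ i (k : ℤ), F (i, k) * F (i, k + 1) =
          1 + (∏ j ∈ univ.filter (· < i), F (j, k) ^ (-C i j).toNat) *
              (∏ j ∈ univ.filter (i < ·), F (j, k + 1) ^ (-C i j).toNat))
    (i : Fin n) (k : ℤ) : (F (i, k) : ℝ) ≤ (2:ℝ) ^ ((p:ℝ) * b i) := by
  have hF1 : ∀ i (k : ℤ), (1:ℝ) ≤ (F (i, k) : ℝ) := fun i k => by exact_mod_cast h1 i k
  have hF0 : ∀ i (k : ℤ), (0:ℝ) < (F (i, k) : ℝ) := fun i k => lt_of_lt_of_le one_pos (hF1 i k)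
  set x : Fin n → ℤ → ℝ := fun i k => Real.log (F (i, k)) with hxdef
  have hx0 : ∀ i (k : ℤ), 0 ≤ x i k := fun i k => Real.log_nonneg (hF1 i k)
  set S : Fin n → ℝ := fun i => ∑ m ∈ Finset.range p, x i m with hSdef
  have hxper : ∀ i (k : ℤ), x i (k + p) = x i k := fun i k => by
    simp only [hxdef, h2]
  -- every value of x is bounded by S
  have hxleS : ∀ i (k : ℤ), x i k ≤ S i := by
    intro i k
    obtain ⟨m, hm, hmeq⟩ := per_toNat hp (f := fun k => F (i, k)) (h2 i) k
    have : x i k = x i m := by simp only [hxdef, hmeq]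
    rw [this]
    exact Finset.single_le_sum (f := fun m : ℕ => x i m) (fun m _ => hx0 i m)
      (Finset.mem_range.mpr hm)
  -- shifted sums equal S
  have hshift : ∀ i, ∑ m ∈ Finset.range p, x i ((m : ℤ) + 1) = S i := by
    intro i
    have e1 := Finset.sum_range_succ' (fun m : ℕ => x i m) p
    have e2 := Finset.sum_range_succ (fun m : ℕ => x i m) p
    have e3 : x i ((p : ℕ) : ℤ) = x i 0 := by
      have := hxper i 0
      simpa using this
    have e4 : ∀ m : ℕ, x i (((m + 1 : ℕ) : ℤ)) = x i ((m : ℤ) + 1) := by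
      intro m; push_cast; ring_nf
    simp only [e4] at e1
    rw [e2, e3] at e1
    norm_num at e1
    simp only [hSdef]
    linarith [e1]
  -- log form of mesh relation
  have hmesh : ∀ i (k : ℤ), x i k + x i (k + 1) ≤ Real.log 2
      + (∑ j ∈ univ.filter (· < i), ((-C i j).toNat : ℝ) * x j k)
      + ∑ j ∈ univ.filter (i < ·), ((-C i j).toNat : ℝ) * x j (k + 1) := by
    intro i k
    set P : ℤ := ∏ j ∈ univ.filter (· < i), F (j, k) ^ (-C i j).toNat with hPdef
    set Q : ℤ := ∏ j ∈ univ.filter (i < ·), F (j, k + 1) ^ (-C i j).toNat with hQdef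
    have hP1 : (1:ℤ) ≤ P := by
      rw [hPdef]
      calc (1:ℤ) = ∏ j ∈ univ.filter (· < i), 1 := by simp
        _ ≤ _ := Finset.prod_le_prod (fun j _ => zero_le_one)
            (fun j _ => one_le_pow₀ (h1 j k))
    have hQ1 : (1:ℤ) ≤ Q := by
      rw [hQdef]
      calc (1:ℤ) = ∏ j ∈ univ.filter (i < ·), 1 := by simp
        _ ≤ _ := Finset.prod_le_prod (fun j _ => zero_le_one)
            (fun j _ => one_le_pow₀ (h1 j (k+1)))
    have hle : F (i, k) * F (i, k + 1) ≤ 2 * (P * Q) := by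
      rw [h3 i k]; nlinarith
    have hleR : (F (i, k) : ℝ) * (F (i, k + 1) : ℝ) ≤ 2 * ((P : ℝ) * (Q : ℝ)) := by
      exact_mod_cast hle
    have hPR : (0:ℝ) < (P:ℝ) := by exact_mod_cast lt_of_lt_of_le one_pos hP1
    have hQR : (0:ℝ) < (Q:ℝ) := by exact_mod_cast lt_of_lt_of_le one_pos hQ1
    have hlog := Real.log_le_log (mul_pos (hF0 i k) (hF0 i (k+1))) hleR
    rw [Real.log_mul (hF0 i k).ne' (hF0 i (k+1)).ne',
        Real.log_mul (by norm_num) (mul_pos hPR hQR).ne',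
        Real.log_mul hPR.ne' hQR.ne'] at hlog
    have hlogP : Real.log (P : ℝ) =
        ∑ j ∈ univ.filter (· < i), ((-C i j).toNat : ℝ) * x j k := by
      rw [hPdef]
      push_cast
      rw [Real.log_prod (fun j _ => pow_ne_zero _ (hF0 j k).ne')]
      exact Finset.sum_congr rfl fun j _ => by rw [Real.log_pow]
    have hlogQ : Real.log (Q : ℝ) =
        ∑ j ∈ univ.filter (i < ·), ((-C i j).toNat : ℝ) * x j (k + 1) := by
      rw [hQdef]
      push_cast
      rw [Real.log_prod (fun j _ => pow_ne_zero _ (hF0 j (k+1)).ne')]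
      exact Finset.sum_congr rfl fun j _ => by rw [Real.log_pow]
    rw [hlogP, hlogQ] at hlog
    linarith
  -- summed mesh relation
  have hmesh_sum : ∀ i, 2 * S i ≤ (p : ℝ) * Real.log 2
      + (∑ j ∈ univ.filter (· < i), ((-C i j).toNat : ℝ) * S j)
      + ∑ j ∈ univ.filter (i < ·), ((-C i j).toNat : ℝ) * S j := by
    intro i
    have hsum := Finset.sum_le_sum (s := Finset.range p)
      (f := fun m : ℕ => x i m + x i ((m : ℤ) + 1))
      (g := fun m : ℕ => Real.log 2
        + (∑ j ∈ univ.filter (· < i), ((-C i j).toNat : ℝ) * x j m)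
        + ∑ j ∈ univ.filter (i < ·), ((-C i j).toNat : ℝ) * x j ((m : ℤ) + 1))
      (fun m _ => hmesh i m)
    rw [Finset.sum_add_distrib, hshift i] at hsum
    have hL : (∑ m ∈ Finset.range p, x i (m : ℤ)) = S i := rfl
    rw [hL] at hsum
    have hA : ∑ _m ∈ Finset.range p, Real.log 2 = (p : ℝ) * Real.log 2 := by
      simp [nsmul_eq_mul]
    have hB : ∑ m ∈ Finset.range p, ∑ j ∈ univ.filter (· < i),
        ((-C i j).toNat : ℝ) * x j m
        = ∑ j ∈ univ.filter (· < i), ((-C i j).toNat : ℝ) * S j := by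
      rw [Finset.sum_comm]
      refine Finset.sum_congr rfl fun j _ => ?_
      rw [← Finset.mul_sum]
    have hB2 : ∑ m ∈ Finset.range p, ∑ j ∈ univ.filter (i < ·),
        ((-C i j).toNat : ℝ) * x j ((m : ℤ) + 1)
        = ∑ j ∈ univ.filter (i < ·), ((-C i j).toNat : ℝ) * S j := by
      rw [Finset.sum_comm]
      refine Finset.sum_congr rfl fun j _ => ?_
      rw [← Finset.mul_sum, hshift j]
    rw [Finset.sum_add_distrib, Finset.sum_add_distrib, hA, hB, hB2] at hsum
    linarith
  -- matrix inequality : (M *ᵥ S) j ≤ p log 2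
  set M := C.map (Int.cast : ℤ → ℝ) with hMdef
  have hMS : ∀ j, (M *ᵥ S) j ≤ (p : ℝ) * Real.log 2 := by
    intro j
    have hsplit := sum_split j (fun l => (M j l) * S l)
    have hdiagR : M j j = 2 := by simp [hMdef, Matrix.map_apply, hdiag j]
    have hcast : ∀ l, l ≠ j → M j l = -(((-C j l).toNat : ℝ)) := by
      intro l hl
      have h0 : C j l ≤ 0 := hoff j l (Ne.symm hl)
      have hz : C j l = -(((-C j l).toNat : ℤ)) := by omega
      simp only [hMdef, Matrix.map_apply]
      exact_mod_cast hz
    have e1 : ∀ l ∈ univ.filter (· < j), M j l * S l = -(((-C j l).toNat : ℝ) * S l) := by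
      intro l hl
      rw [hcast l (by simp at hl; exact hl.ne)]
      ring
    have e2 : ∀ l ∈ univ.filter (j < ·), M j l * S l = -(((-C j l).toNat : ℝ) * S l) := by
      intro l hl
      rw [hcast l (by simp at hl; exact hl.ne')]
      ring
    have hMv : (M *ᵥ S) j = ∑ l, M j l * S l := rfl
    rw [hMv, hsplit, Finset.sum_congr rfl e1, Finset.sum_congr rfl e2,
      Finset.sum_neg_distrib, Finset.sum_neg_distrib, hdiagR]
    have := hmesh_sum j
    linarith
  -- invert
  have hb0 : 0 ≤ (p : ℝ) * Real.log 2 := by positivity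
  have hSle : S i ≤ ((p : ℝ) * Real.log 2) * b i := by
    have e0 : S i = (M⁻¹ *ᵥ (M *ᵥ S)) i := by
      rw [Matrix.mulVec_mulVec, Matrix.nonsing_inv_mul M hC, Matrix.one_mulVec]
    rw [e0]
    have e1 : (M⁻¹ *ᵥ (M *ᵥ S)) i = ∑ j, M⁻¹ i j * (M *ᵥ S) j := rfl
    rw [e1]
    calc ∑ j, M⁻¹ i j * (M *ᵥ S) j
        ≤ ∑ j, M⁻¹ i j * ((p : ℝ) * Real.log 2) :=
          Finset.sum_le_sum fun j _ => mul_le_mul_of_nonneg_left (hMS j) (hinv i j).le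
      _ = ((p : ℝ) * Real.log 2) * b i := by
          rw [hb i, ← Finset.sum_mul]; ring
  -- conclude
  have hxk : x i k ≤ ((p : ℝ) * b i) * Real.log 2 := by
    have := hxleS i k
    nlinarith [Real.log_pos (by norm_num : (1:ℝ) < 2)]
  have h2pos : (0:ℝ) < (2:ℝ) ^ ((p:ℝ) * b i) := Real.rpow_pos_of_pos two_pos _
  rw [← Real.log_le_log_iff (hF0 i k) h2pos, Real.log_rpow two_pos]
  exact hxk

open Finset in
/-- The set of p-periodic positive integral friezes for a generalized Cartan
matrix C of finite Dynkin type is finite, with cardinality at most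
2^(p²·∑ᵢ bᵢ), where bᵢ is the i-th row sum of C⁻¹. -/
theorem stmt_12 {n : ℕ} (C : Matrix (Fin n) (Fin n) ℤ)
    (hdiag : ∀ i, C i i = 2) (hoff : ∀ i j, i ≠ j → C i j ≤ 0)
    (hC : IsUnit (C.map (Int.cast : ℤ → ℝ)).det)
    (hinv : ∀ i j, 0 < (C.map (Int.cast : ℤ → ℝ))⁻¹ i j)
    (b : Fin n → ℝ) (hb : ∀ i, b i = ∑ j, (C.map (Int.cast : ℤ → ℝ))⁻¹ i j)
    (p : ℕ) (hp : 1 ≤ p) :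
    ({F : Fin n × ℤ → ℤ |
        (∀ i k, 1 ≤ F (i, k)) ∧
        (∀ i (k : ℤ), F (i, k + p) = F (i, k)) ∧
        (∀ i (k : ℤ), F (i, k) * F (i, k + 1) =
          1 + (∏ j ∈ univ.filter (· < i), F (j, k) ^ (-C i j).toNat) *
              (∏ j ∈ univ.filter (i < ·), F (j, k + 1) ^ (-C i j).toNat))}).Finite ∧
    (({F : Fin n × ℤ → ℤ |
        (∀ i k, 1 ≤ F (i, k)) ∧
        (∀ i (k : ℤ), F (i, k + p) = F (i, k)) ∧
        (∀ i (k : ℤ), F (i, k) * F (i, k + 1) =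
          1 + (∏ j ∈ univ.filter (· < i), F (j, k) ^ (-C i j).toNat) *
              (∏ j ∈ univ.filter (i < ·), F (j, k + 1) ^ (-C i j).toNat))}).ncard : ℝ)
      ≤ 2 ^ ((p : ℝ) ^ 2 * ∑ i, b i) := by
  set SS : Set (Fin n × ℤ → ℤ) := {F : Fin n × ℤ → ℤ |
        (∀ i k, 1 ≤ F (i, k)) ∧
        (∀ i (k : ℤ), F (i, k + p) = F (i, k)) ∧
        (∀ i (k : ℤ), F (i, k) * F (i, k + 1) =
          1 + (∏ j ∈ univ.filter (· < i), F (j, k) ^ (-C i j).toNat) *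
              (∏ j ∈ univ.filter (i < ·), F (j, k + 1) ^ (-C i j).toNat))} with hSSdef
  have hbpos : ∀ i : Fin n, 0 < b i := fun i => by
    rw [hb i]
    exact Finset.sum_pos (fun j _ => hinv i j) ⟨i, mem_univ i⟩
  set B : Fin n → ℤ := fun i => ⌊(2:ℝ) ^ ((p:ℝ) * b i)⌋ with hBdef
  have hB1 : ∀ i, 1 ≤ B i := fun i => Int.le_floor.mpr (by
    simpa using Real.one_le_rpow (by norm_num)
      (mul_nonneg (Nat.cast_nonneg p) (hbpos i).le))
  have hbound : ∀ F ∈ SS, ∀ i (k : ℤ), F (i, k) ≤ B i := by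
    intro F hF i k
    obtain ⟨hF1, hF2, hF3⟩ := hF
    exact Int.le_floor.mpr (key_bound C hdiag hoff hC hinv b hb p hp F hF1 hF2 hF3 i k)
  set φ : (Fin n × ℤ → ℤ) → (Fin n × Fin p → ℤ) :=
    fun F q => F (q.1, ((q.2 : ℕ) : ℤ)) with hφdef
  have hinj : Set.InjOn φ SS := by
    intro F hF G' hG' hEq
    funext z
    obtain ⟨i, k⟩ := z
    obtain ⟨hm, hFk⟩ := per_rep (f := fun k => F (i, k)) hp (hF.2.1 i) k
    obtain ⟨_, hGk⟩ := per_rep (f := fun k => G' (i, k)) hp (hG'.2.1 i) k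
    rw [hFk, hGk]
    exact congrFun hEq (i, ⟨(k % p).toNat, hm⟩)
  set G : Finset (Fin n × Fin p → ℤ) :=
    Fintype.piFinset (fun q : Fin n × Fin p => Finset.Icc 1 (B q.1)) with hGdef
  have hsub : φ '' SS ⊆ ↑G := by
    rintro g ⟨F, hF, rfl⟩
    simp only [Finset.mem_coe, hGdef, Fintype.mem_piFinset]
    intro q
    rw [Finset.mem_Icc]
    exact ⟨hF.1 q.1 ((q.2 : ℕ) : ℤ), hbound F hF q.1 ((q.2 : ℕ) : ℤ)⟩
  have hGfin : (↑G : Set (Fin n × Fin p → ℤ)).Finite := G.finite_toSet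
  have hfin : SS.Finite := Set.Finite.of_finite_image (hGfin.subset hsub) hinj
  refine ⟨hfin, ?_⟩
  have hcard : SS.ncard ≤ G.card := by
    rw [← Set.ncard_coe_finset, ← Set.ncard_image_of_injOn hinj]
    exact Set.ncard_le_ncard hsub hGfin
  have hGcard : G.card = ∏ q : Fin n × Fin p, (B q.1).toNat := by
    rw [hGdef, Fintype.card_piFinset]
    exact Finset.prod_congr rfl fun q _ => by rw [Int.card_Icc]; norm_num
  calc (SS.ncard : ℝ) ≤ (G.card : ℝ) := by exact_mod_cast hcard
    _ = ∏ q : Fin n × Fin p, ((B q.1).toNat : ℝ) := by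
        rw [hGcard]; exact Nat.cast_prod _ _
    _ ≤ ∏ q : Fin n × Fin p, (2:ℝ) ^ ((p:ℝ) * b q.1) := by
        apply Finset.prod_le_prod (fun q _ => by positivity)
        intro q _
        have h1 : ((B q.1).toNat : ℝ) = ((B q.1 : ℤ) : ℝ) := by
          exact_mod_cast congrArg (fun t : ℤ => (t : ℝ))
            (Int.toNat_of_nonneg (by linarith [hB1 q.1]))
        rw [h1, hBdef]
        exact Int.floor_le _
    _ = (2:ℝ) ^ ((p:ℝ) ^ 2 * ∑ i, b i) := by
        simp_rw [Real.rpow_def_of_pos two_pos]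
        rw [← Real.exp_sum]
        congr 1
        rw [Fintype.sum_prod_type]
        simp only [Finset.sum_const, Finset.card_univ, Fintype.card_fin, nsmul_eq_mul]
        trans ∑ i : Fin n, (Real.log 2 * ((p:ℝ) ^ 2)) * b i
        · exact Finset.sum_congr rfl fun i _ => by ring
        · rw [← Finset.mul_sum]; ring
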